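/- Let T be a self-adjoint bounded operator on a Hilbert space H with an orthonormal basis {ψ_j} of eigenvectors, T ψ_j = λ_j ψ_j. Then for any continuous bounded function g : ℝ → ℝ and any u ∈ H, the operator g(T) defined by the continuous functional calculus satisfies g(T)u = Σ_j g(λ_j)·⟨u, ψ_j⟩·ψ_j, the series converging in H. -/

import Mathlib

open scoped InnerProductSpace


/-- An eigenvalue of a bounded operator lies in the real spectrum. -/
lemma aux_mem_spectrum {H : Type*} [NormedAddCommGroup H] [InnerProductSpace ℂ H]
    [CompleteSpace H] (T : H →L[ℂ] H) {v : H} (hv : v ≠ 0) {l : ℝ}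
    (hTv : T v = (l : ℂ) • v) : l ∈ spectrum ℝ T := by
  rw [spectrum.mem_iff]
  intro hunit
  obtain ⟨u, hu⟩ := hunit
  have h0 : (algebraMap ℝ (H →L[ℂ] H) l - T) v = 0 := by
    simp [ContinuousLinearMap.sub_apply, hTv, Algebra.algebraMap_eq_smul_one]
  apply hv
  calc v = (u.inv * u.val) v := by rw [u.inv_val]; rfl
    _ = u.inv ((algebraMap ℝ (H →L[ℂ] H) l - T) v) := by rw [hu]; rfl
    _ = 0 := by rw [h0]; simp

lemma aux_cfc_eigenvector {H : Type*} [NormedAddCommGroup H] [InnerProductSpace ℂ H]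
    [CompleteSpace H] (T : H →L[ℂ] H) (hsa : IsSelfAdjoint T) {v : H} (hv : v ≠ 0) {l : ℝ}
    (hTv : T v = (l : ℂ) • v) (g : ℝ → ℝ) (hg : Continuous g) :
    cfc g T v = g l • v := by
  have hl : l ∈ spectrum ℝ T := aux_mem_spectrum T hv hTv
  have key : ∀ f : C(spectrum ℝ T, ℝ), cfcHom hsa f v = f ⟨l, hl⟩ • v := by
    intro f
    induction f using ContinuousMap.induction_on_of_compact with
    | const r =>
      have : ContinuousMap.const (spectrum ℝ T) r = algebraMap ℝ C(spectrum ℝ T, ℝ) r := rfl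
      rw [this, AlgHomClass.commutes]
      simp [Algebra.algebraMap_eq_smul_one]
    | id =>
      rw [cfcHom_id hsa]
      simp only [ContinuousMap.restrict_apply, ContinuousMap.id_apply]
      rw [hTv, show (l : ℂ) • v = l • v from (algebraMap_smul ℂ l v).symm]
    | star_id =>
      rw [star_trivial, cfcHom_id hsa]
      simp only [ContinuousMap.restrict_apply, ContinuousMap.id_apply]
      rw [hTv, show (l : ℂ) • v = l • v from (algebraMap_smul ℂ l v).symm]
    | add f₁ f₂ h₁ h₂ =>
      rw [map_add, ContinuousLinearMap.add_apply, h₁, h₂, ContinuousMap.add_apply, add_smul]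
    | mul f₁ f₂ h₁ h₂ =>
      rw [map_mul, ContinuousLinearMap.mul_apply, h₂, ContinuousLinearMap.map_smul_of_tower, h₁, ContinuousMap.mul_apply,
        mul_comm, mul_smul]
    | frequently f hf =>
      have hc1 : Continuous fun f : C(spectrum ℝ T, ℝ) => cfcHom hsa (p := IsSelfAdjoint) f v :=
        ((ContinuousLinearMap.apply ℂ H v).continuous).comp
          (cfcHom_isClosedEmbedding hsa).continuous
      have hc2 : Continuous fun f : C(spectrum ℝ T, ℝ) => f ⟨l, hl⟩ • v :=
        by fun_prop
      have hmem : f ∈ closure {f : C(spectrum ℝ T, ℝ) |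
          cfcHom hsa (p := IsSelfAdjoint) f v = f ⟨l, hl⟩ • v} :=
        mem_closure_iff_frequently.2 hf
      exact (isClosed_eq hc1 hc2).closure_subset hmem
  rw [cfc_apply g T hsa (hg.continuousOn)]
  exact key _

/-- Spectral representation of the continuous functional calculus: if a bounded self-adjoint
operator `T` on a Hilbert space has an orthonormal (Hilbert) basis `ψ` of eigenvectors with
real eigenvalues `lam j`, then for every continuous bounded `g : ℝ → ℝ` and every `u`,
`g(T) u = Σ_j g(lam j) ⟨u,ψ_j⟩ ψ_j`, the series converging in `H`. -/
theorem stmt5 {H : Type*} [NormedAddCommGroup H] [InnerProductSpace ℂ H] [CompleteSpace H]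
    {ι : Type*} (ψ : HilbertBasis ι ℂ H)
    (T : H →L[ℂ] H) (hsa : IsSelfAdjoint T)
    (lam : ι → ℝ) (heig : ∀ j, T (ψ j) = (lam j : ℂ) • ψ j)
    (g : ℝ → ℝ) (hg : Continuous g) (hgb : ∃ C : ℝ, ∀ s : ℝ, |g s| ≤ C)
    (u : H) :
    HasSum (fun j : ι => ((g (lam j) : ℂ)) • (⟪(ψ j : H), u⟫_ℂ • (ψ j : H)))
      ((cfc g T) u) := by
  have hrepr : HasSum (fun j : ι => ⟪(ψ j : H), u⟫_ℂ • (ψ j : H)) u := by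
    simpa [HilbertBasis.repr_apply_apply] using ψ.hasSum_repr u
  have hmap := hrepr.mapL (cfc g T)
  have hfun : (fun j : ι => ((g (lam j) : ℂ)) • (⟪(ψ j : H), u⟫_ℂ • (ψ j : H)))
      = fun j : ι => (cfc g T) (⟪(ψ j : H), u⟫_ℂ • (ψ j : H)) := by
    funext j
    rw [map_smul, aux_cfc_eigenvector T hsa (ψ.orthonormal.ne_zero j) (heig j) g hg,
      show g (lam j) • (ψ j : H) = ((g (lam j) : ℂ)) • (ψ j : H) from
        (algebraMap_smul ℂ _ _).symm, smul_comm]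
  rw [hfun]
  exact hmap
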